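/- The Z-operators of the representation π act trivially on the Fock factor F and commute with the Heisenberg algebra: for every m ∈ ℤ, the operator Z⁺(m) := Σ_{a,b≥0} (d⁻_a ⊗1⊗1) ∘ X(m+a−b) ∘ (c⁻_b ⊗1⊗1) on V (the coefficient of z^{−m} in E⁻₊(z)X(z)E⁻₋(z); only finitely many terms act nontrivially on each vector) satisfies Z⁺(m)(f⊗v⊗e^{pα}) = f ⊗ A(m−p−1/2)v ⊗ e^{(p+1)α}, and the operator Z⁻(m) := Σ_{a,b≥0} (d⁺_a ⊗1⊗1) ∘ Y(m+a−b) ∘ (c⁺_b ⊗1⊗1) satisfies Z⁻(m)(f⊗v⊗e^{pα}) = f ⊗ A*(m+p−1/2)v ⊗ e^{(p−1)α}. In particular, Z⁺(m) and Z⁻(m) commute with H(n)⊗1⊗1 for every n ≠ 0. -/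

import Mathlib

open MvPolynomial

/-- The semi-infinite wedge space `Λ`: complex vector space with basis `v_{S,T}`
indexed by pairs `(S, T)` of finite subsets of the positive integers.  The basis
vector `v_{S,T}` encodes the semi-infinite wedge product with support
`supp(S,T) = {-s-1/2 : s ∈ S} ∪ {-1/2} ∪ {k+1/2 : k ∈ ℤ_{≥1}, k ∉ T} ⊆ ℤ + 1/2`. -/
abbrev Wedge : Type := (Finset ℕ+ × Finset ℕ+) →₀ ℂ

/-- Image of the basis vector `v_{S,T}` under the operator `A(m)` (for `m ∈ ℤ + 1/2`,
i.e. a rational with denominator `2`; `A(m) := 0` for other rationals).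
`A(m) v_{S,T} = 0` if `m ∈ supp(S,T)` or `m = 1/2`; otherwise
`A(m) v_{S,T} = (m - 1/2) ⬝ (-1)^j ⬝ v_{S',T'}` where `j = #{i ∈ supp(S,T) : i < m}`
and `supp(S',T') = supp(S,T) ∪ {m}`.  Writing `m = n + 1/2` with `n = ⌊m⌋ ∈ ℤ`:
if `n ≥ 1` then `m ∈ supp(S,T)` iff `n ∉ T`, and the new support corresponds to
`(S, T \ {n})` with sign exponent `j = |S| + n - #{t ∈ T : t < n}`;
if `n ≤ -2` then `m = -s - 1/2` with `s = -n-1 ≥ 1`, `m ∈ supp(S,T)` iff `s ∈ S`,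
and the new support corresponds to `(S ∪ {s}, T)` with `j = #{s' ∈ S : s' > s}`;
if `n = 0` (`m = 1/2`) or `n = -1` (`m = -1/2 ∈ supp(S,T)`) the result is `0`. -/
noncomputable def Abasis (m : ℚ) (ST : Finset ℕ+ × Finset ℕ+) : Wedge :=
  if m.den = 2 then
    let n : ℤ := ⌊m⌋
    if hn : 1 ≤ n then
      let k : ℕ+ := ⟨n.toNat, by omega⟩
      if k ∈ ST.2 then
        (((n : ℂ)) * (-1) ^ (ST.1.card + n.toNat - (ST.2.filter (· < k)).card)) •
          Finsupp.single (ST.1, ST.2.erase k) (1 : ℂ)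
      else 0
    else if hn' : n ≤ -2 then
      let s : ℕ+ := ⟨(-n - 1).toNat, by omega⟩
      if s ∈ ST.1 then 0
      else
        (((n : ℂ)) * (-1) ^ ((ST.1.filter (s < ·)).card)) •
          Finsupp.single (insert s ST.1, ST.2) (1 : ℂ)
    else 0
  else 0

/-- Image of the basis vector `v_{S,T}` under the operator `A*(m)` (for `m ∈ ℤ + 1/2`).
`A*(m) v_{S,T} = 0` if `-m ∉ supp(S,T)` or `m = 1/2`; otherwise
`A*(m) v_{S,T} = (m - 1/2) ⬝ (-1)^{j'} ⬝ v_{S'',T''}` where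
`j' = #{i ∈ supp(S,T) : i < -m}` and `supp(S'',T'') = supp(S,T) \ {-m}`.
Writing `m = n + 1/2`, `n = ⌊m⌋`: if `n ≥ 1` then `-m = -n - 1/2 ∈ supp(S,T)` iff
`n ∈ S`, new pair `(S \ {n}, T)`, `j' = #{s' ∈ S : s' > n}`; if `n ≤ -2` then
`-m = k + 1/2` with `k = -n-1 ≥ 1`, `-m ∈ supp(S,T)` iff `k ∉ T`, new pair
`(S, T ∪ {k})`, `j' = |S| + k - #{t ∈ T : t < k}`; otherwise `0`. -/
noncomputable def AstarBasis (m : ℚ) (ST : Finset ℕ+ × Finset ℕ+) : Wedge :=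
  if m.den = 2 then
    let n : ℤ := ⌊m⌋
    if hn : 1 ≤ n then
      let s : ℕ+ := ⟨n.toNat, by omega⟩
      if s ∈ ST.1 then
        (((n : ℂ)) * (-1) ^ ((ST.1.filter (s < ·)).card)) •
          Finsupp.single (ST.1.erase s, ST.2) (1 : ℂ)
      else 0
    else if hn' : n ≤ -2 then
      let k : ℕ+ := ⟨(-n - 1).toNat, by omega⟩
      if k ∈ ST.2 then 0
      else
        (((n : ℂ)) * (-1) ^ (ST.1.card + (-n - 1).toNat - (ST.2.filter (· < k)).card)) •
          Finsupp.single (ST.1, insert k ST.2) (1 : ℂ)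
    else 0
  else 0

/-- The operator `A(m)` on the semi-infinite wedge space `Λ`, extended linearly. -/
noncomputable def Aop (m : ℚ) : Wedge →ₗ[ℂ] Wedge :=
  Finsupp.lsum ℂ fun ST => LinearMap.toSpanSingleton ℂ Wedge (Abasis m ST)

/-- The operator `A*(m)` on the semi-infinite wedge space `Λ`, extended linearly. -/
noncomputable def AstarOp (m : ℚ) : Wedge →ₗ[ℂ] Wedge :=
  Finsupp.lsum ℂ fun ST => LinearMap.toSpanSingleton ℂ Wedge (AstarBasis m ST)

/-- The Fock space `F = ℂ[x_1, x_2, ...]`, a polynomial ring in countably many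
variables indexed by the positive integers. -/
abbrev Fock : Type := MvPolynomial ℕ+ ℂ

/-- Endomorphisms of the Fock space. -/
abbrev EndF : Type := Module.End ℂ Fock

/-- The Heisenberg operators on the Fock space: `H(-n)` is multiplication by `x_n`
and `H(n) = -4n ∂/∂x_n` for `n ≥ 1` (and `0` for `n = 0`, which is never used). -/
noncomputable def HF (n : ℤ) : EndF :=
  if hn : 1 ≤ n then ((-4 : ℂ) * (n : ℂ)) • (pderiv (⟨n.toNat, by omega⟩ : ℕ+)).toLinearMap
  else if hn' : n ≤ -1 then LinearMap.mulLeft ℂ (X (⟨(-n).toNat, by omega⟩ : ℕ+))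
  else 0

/-- `sgn true = -1`, `sgn false = 1`: the sign `∓` attached to the label `ε ∈ {+, -}`
(`ε = +` is `true`), as in `E^±_+(z) = exp(∓ Σ_{n>0} x_n z^n / (2n))`. -/
def sgn (ε : Bool) : ℂ := if ε then -1 else 1

/-- The coefficient of `z^k` in the exponential `exp(g(z)) = Σ_j g(z)^j / j!` of an
operator-valued formal power series `g` (with zero constant term, so that only the
terms `j ≤ k` contribute to the coefficient of `z^k`). -/
noncomputable def expCoeff (g : PowerSeries EndF) (k : ℕ) : EndF :=
  ∑ j ∈ Finset.range (k + 1), ((j.factorial : ℂ))⁻¹ • (PowerSeries.coeff k (g ^ j))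

/-- The series `∓ Σ_{n > 0} x_n z^n / (2n)` (multiplication operators). -/
noncomputable def dSeries (ε : Bool) : PowerSeries EndF :=
  PowerSeries.mk fun n =>
    if hn : 0 < n then sgn ε • (((2 * n : ℂ))⁻¹ • LinearMap.mulLeft ℂ (X (⟨n, hn⟩ : ℕ+)))
    else 0

/-- The series `∓ 2 Σ_{n > 0} (∂/∂x_n) w^n`, where `w` stands for `z^{-1}`. -/
noncomputable def cSeries (ε : Bool) : PowerSeries EndF :=
  PowerSeries.mk fun n =>
    if hn : 0 < n then sgn ε • ((2 : ℂ) • (pderiv (⟨n, hn⟩ : ℕ+)).toLinearMap)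
    else 0

/-- `d^ε_l`, the coefficient of `z^l` in `E^ε_+(z) = exp(∓ Σ_{n>0} x_n z^n/(2n))`. -/
noncomputable def dOp (ε : Bool) (l : ℕ) : EndF := expCoeff (dSeries ε) l

/-- `c^ε_k`, the coefficient of `z^{-k}` in `E^ε_-(z) = exp(∓ 2 Σ_{n>0} (∂/∂x_n) z^{-n})`. -/
noncomputable def cOp (ε : Bool) (k : ℕ) : EndF := expCoeff (cSeries ε) k

/-- The space `V = F ⊗ Λ ⊗ ℂ[ℤα]`, realized as finitely supported functions from
the basis `{v_{S,T} ⊗ e^{pα}}` of `Λ ⊗ ℂ[ℤα]` to the Fock space `F`: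
the index `((S,T), p)` records the basis vector `v_{S,T} ⊗ e^{pα}` and the value
is the `F`-coordinate, so `Finsupp.single ((S,T), p) f` is `f ⊗ v_{S,T} ⊗ e^{pα}`. -/
abbrev VV : Type := ((Finset ℕ+ × Finset ℕ+) × ℤ) →₀ Fock

/-- `emb w p f` is the element `f ⊗ w ⊗ e^{pα}` of `V` for `w ∈ Λ`. -/
noncomputable def emb (w : Wedge) (p : ℤ) (f : Fock) : VV :=
  w.sum fun ST c => Finsupp.single (ST, p) (c • f)

/-- The operator `X(m)` of the representation `π` on `V`:
`X(m)(f ⊗ v_{S,T} ⊗ e^{pα}) = Σ_{l,k ≥ 0} (d^+_l c^+_k f) ⊗ A(m+l-k-p-1/2) v_{S,T} ⊗ e^{(p+1)α}`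
(only finitely many summands are nonzero on each vector). -/
noncomputable def Xop (m : ℤ) : VV → VV := fun u =>
  u.sum fun STp f =>
    ∑ᶠ lk : ℕ × ℕ,
      emb (Abasis ((m : ℚ) + lk.1 - lk.2 - STp.2 - 1/2) STp.1) (STp.2 + 1)
        (dOp true lk.1 (cOp true lk.2 f))

/-- The operator `Y(m)` of the representation `π` on `V`:
`Y(m)(f ⊗ v_{S,T} ⊗ e^{pα}) = Σ_{l,k ≥ 0} (d^-_l c^-_k f) ⊗ A*(m+l-k+p-1/2) v_{S,T} ⊗ e^{(p-1)α}`. -/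
noncomputable def Yop (m : ℤ) : VV → VV := fun u =>
  u.sum fun STp f =>
    ∑ᶠ lk : ℕ × ℕ,
      emb (AstarBasis ((m : ℚ) + lk.1 - lk.2 + STp.2 - 1/2) STp.1) (STp.2 - 1)
        (dOp false lk.1 (cOp false lk.2 f))

/-- The operator `H(m)` of the representation `π` on `V`: for `m ≠ 0` it acts as
`H(m)` on the Fock factor, and `H(0)` acts on `f ⊗ v ⊗ e^{pα}` by the scalar `2p`. -/
noncomputable def HVop (m : ℤ) : VV → VV := fun u =>
  u.sum fun STp f =>
    Finsupp.single STp (if m = 0 then ((2 : ℂ) * (STp.2 : ℂ)) • f else HF m f)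

/-- The weight of a monomial `x₁^{a₁} x₂^{a₂} ⋯`, namely `Σ n aₙ`. -/
def wtMon (μ : ℕ+ →₀ ℕ) : ℚ := μ.sum fun n a => (n : ℚ) * a

/-- The degree of the basis vector `v_{S,T}` of `Λ`: `Σ_{s∈S} s + Σ_{t∈T} t`. -/
def degWedge (ST : Finset ℕ+ × Finset ℕ+) : ℚ :=
  (∑ s ∈ ST.1, (s : ℚ)) + ∑ t ∈ ST.2, (t : ℚ)

/-- The degree operator `d` of the representation `π` on `V`:
`d (f ⊗ v_{S,T} ⊗ e^{pα}) = (-wt(f) - deg(v_{S,T}) - p²/2) ⬝ (f ⊗ v_{S,T} ⊗ e^{pα})`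
on monomials `f`. -/
noncomputable def dV : VV → VV := fun u =>
  u.sum fun STp f =>
    Finsupp.single STp
      (∑ μ ∈ f.support,
        monomial μ
          ((((-(wtMon μ) - degWedge STp.1 - (STp.2 : ℚ) ^ 2 / 2 : ℚ) : ℂ)) * coeff μ f))

/-- The vacuum space `Ω = Λ ⊗ ℂ[ℤα]`, with basis `{v_{S,T} ⊗ e^{pα}}`. -/
abbrev Vac : Type := ((Finset ℕ+ × Finset ℕ+) × ℤ) →₀ ℂ

/-- `embVac w p` is the element `w ⊗ e^{pα}` of `Ω` for `w ∈ Λ`. -/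
noncomputable def embVac (w : Wedge) (p : ℤ) : Vac :=
  w.sum fun ST c => Finsupp.single (ST, p) c

/-- The operator `Z⁺(m)` on `Ω`: `Z⁺(m)(v ⊗ e^{pα}) = A(m-p-1/2)v ⊗ e^{(p+1)α}`. -/
noncomputable def Zplus (m : ℤ) : Vac → Vac := fun u =>
  u.sum fun STp c => c • embVac (Abasis ((m : ℚ) - STp.2 - 1/2) STp.1) (STp.2 + 1)

/-- The operator `Z⁻(m)` on `Ω`: `Z⁻(m)(v ⊗ e^{pα}) = A*(m+p-1/2)v ⊗ e^{(p-1)α}`. -/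
noncomputable def Zminus (m : ℤ) : Vac → Vac := fun u =>
  u.sum fun STp c => c • embVac (AstarBasis ((m : ℚ) + STp.2 - 1/2) STp.1) (STp.2 - 1)

/-- Extension to `V = F ⊗ Λ ⊗ ℂ[ℤα]` of an operator `e` on the Fock factor,
i.e. `e ⊗ 1 ⊗ 1`. -/
noncomputable def extF (e : EndF) : VV → VV := fun u =>
  u.sum fun STp f => Finsupp.single STp (e f)

/-- The operator `Z⁺(m) = Σ_{a,b≥0} (d⁻_a ⊗ 1 ⊗ 1) ∘ X(m+a-b) ∘ (c⁻_b ⊗ 1 ⊗ 1)` on `V`,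
the coefficient of `z^{-m}` in `E⁻₊(z) X(z) E⁻₋(z)` (only finitely many summands act
nontrivially on each vector). -/
noncomputable def ZplusV (m : ℤ) : VV → VV := fun u =>
  ∑ᶠ ab : ℕ × ℕ,
    extF (dOp false ab.1) (Xop (m + (ab.1 : ℤ) - (ab.2 : ℤ)) (extF (cOp false ab.2) u))

/-- The operator `Z⁻(m) = Σ_{a,b≥0} (d⁺_a ⊗ 1 ⊗ 1) ∘ Y(m+a-b) ∘ (c⁺_b ⊗ 1 ⊗ 1)` on `V`,
the coefficient of `z^{-m}` in `E⁺₊(z) Y(z) E⁺₋(z)`. -/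
noncomputable def ZminusV (m : ℤ) : VV → VV := fun u =>
  ∑ᶠ ab : ℕ × ℕ,
    extF (dOp true ab.1) (Yop (m + (ab.1 : ℤ) - (ab.2 : ℤ)) (extF (cOp true ab.2) u))

/-- `Ncount j` is the number of quadruples `(a, S, T, p)` with `a : ℤ_{≥1} → ℤ_{≥0}`
finitely supported, `S, T` finite subsets of the positive integers and `p ∈ ℤ`,
satisfying `2 Σ_{n≥1} n a(n) + 2 (Σ_{s∈S} s + Σ_{t∈T} t) + p² = j`; this is the
dimension of the eigenspace of `d` with eigenvalue `-j/2` on `V`. -/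
noncomputable def Ncount (j : ℕ) : ℕ :=
  Nat.card {q : (ℕ+ →₀ ℕ) × Finset ℕ+ × Finset ℕ+ × ℤ //
    2 * (q.1.sum fun n a => (n : ℤ) * a) +
      2 * ((∑ s ∈ q.2.1, (s : ℤ)) + ∑ t ∈ q.2.2.1, (t : ℤ)) + q.2.2.2 ^ 2 = (j : ℤ)}

section Conv
open PowerSeries

variable {R : Type*} [Ring R] [Algebra ℚ R]

-- we specialize to EndF later; state for EndF directly to avoid instance issues
end Conv

set_option synthInstance.maxHeartbeats 1000000
set_option maxHeartbeats 1000000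

namespace ZAux

lemma coeff_pow_zero (g : PowerSeries EndF) (hg : PowerSeries.constantCoeff g = 0) :
    ∀ i a, a < i → PowerSeries.coeff a (g ^ i) = 0 := by
  intro i
  induction i with
  | zero => intro a ha; omega
  | succ n ih =>
    intro a ha
    rw [pow_succ', PowerSeries.coeff_mul]
    apply Finset.sum_eq_zero
    rintro ⟨x, y⟩ hxy
    rw [Finset.HasAntidiagonal.mem_antidiagonal] at hxy
    rcases Nat.eq_zero_or_pos x with hx | hx
    · subst hx
      have h0 : PowerSeries.coeff 0 g = 0 := by
        rw [PowerSeries.coeff_zero_eq_constantCoeff, hg]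
      rw [h0, zero_mul]
    · have : y < n := by omega
      rw [ih y this, mul_zero]

lemma expCoeff_eq_coeff_partial (g : PowerSeries EndF)
    (hg : PowerSeries.constantCoeff g = 0) (r a : ℕ) (ha : a ≤ r) :
    expCoeff g a =
      PowerSeries.coeff a (∑ i ∈ Finset.range (r + 1), (i.factorial : ℂ)⁻¹ • g ^ i) := by
  rw [map_sum, expCoeff]
  simp only [PowerSeries.coeff_smul]
  refine Finset.sum_subset (by intro x hx; simp_all; omega) ?_
  intro i hi hi2
  simp only [Finset.mem_range] at hi hi2
  rw [coeff_pow_zero g hg i a (by omega), smul_zero]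

lemma conv_key (g : PowerSeries EndF) (hg : PowerSeries.constantCoeff g = 0) (r : ℕ) :
    ∑ ab ∈ Finset.HasAntidiagonal.antidiagonal r, expCoeff g ab.1 * expCoeff (-g) ab.2 =
      if r = 0 then 1 else 0 := by
  have hng : PowerSeries.constantCoeff (-g) = 0 := by rw [map_neg, hg, neg_zero]
  set P := ∑ i ∈ Finset.range (r + 1), (i.factorial : ℂ)⁻¹ • g ^ i with hP
  set Q := ∑ j ∈ Finset.range (r + 1), (j.factorial : ℂ)⁻¹ • (-g) ^ j with hQ
  have step1 : ∑ ab ∈ Finset.HasAntidiagonal.antidiagonal r, expCoeff g ab.1 * expCoeff (-g) ab.2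
      = PowerSeries.coeff r (P * Q) := by
    rw [PowerSeries.coeff_mul]
    refine Finset.sum_congr rfl ?_
    rintro ⟨a, b⟩ hab
    rw [Finset.HasAntidiagonal.mem_antidiagonal] at hab
    rw [expCoeff_eq_coeff_partial g hg r a (by omega),
      expCoeff_eq_coeff_partial (-g) hng r b (by omega)]
  rw [step1]
  have hPQ : P * Q = ∑ p ∈ Finset.range (r+1) ×ˢ Finset.range (r+1),
      (((p.1.factorial : ℂ)⁻¹ * (p.2.factorial : ℂ)⁻¹) * (-1 : ℂ) ^ p.2) • g ^ (p.1 + p.2) := by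
    rw [hP, hQ, Finset.sum_mul_sum]
    rw [Finset.sum_product]
    refine Finset.sum_congr rfl fun i _ => Finset.sum_congr rfl fun j _ => ?_
    have hneg : (-g) ^ j = ((-1 : ℂ) ^ j) • g ^ j := by
      rw [← smul_pow]
      norm_num
    rw [hneg, smul_mul_smul_comm, mul_smul_comm, smul_smul, pow_add]
  rw [hPQ, map_sum]
  simp only [PowerSeries.coeff_smul]
  -- restrict to antidiagonal biUnion
  have hsub : (Finset.range (r+1)).biUnion (fun n => Finset.HasAntidiagonal.antidiagonal n)
      ⊆ Finset.range (r+1) ×ˢ Finset.range (r+1) := by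
    intro p hp
    simp only [Finset.mem_biUnion, Finset.mem_range, Finset.HasAntidiagonal.mem_antidiagonal] at hp
    obtain ⟨n, hn, hpn⟩ := hp
    simp only [Finset.mem_product, Finset.mem_range]
    omega
  rw [← Finset.sum_subset hsub ?zero]
  case zero =>
    intro p hp hp2
    simp only [Finset.mem_product, Finset.mem_range] at hp
    have : r < p.1 + p.2 := by
      by_contra h
      exact hp2 (Finset.mem_biUnion.2 ⟨p.1 + p.2, Finset.mem_range.2 (by omega),
        Finset.HasAntidiagonal.mem_antidiagonal.2 rfl⟩)
    rw [coeff_pow_zero g hg _ _ this, smul_zero]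
  rw [Finset.sum_biUnion ?disj]
  case disj =>
    intro x hx y hy hxy
    simp only [Finset.disjoint_left]
    intro p hpx hpy
    rw [Finset.HasAntidiagonal.mem_antidiagonal] at hpx hpy
    exact hxy (by omega)
  have inner : ∀ n ∈ Finset.range (r+1),
      (∑ p ∈ Finset.HasAntidiagonal.antidiagonal n,
        (((p.1.factorial : ℂ)⁻¹ * (p.2.factorial : ℂ)⁻¹) * (-1 : ℂ) ^ p.2) •
          PowerSeries.coeff r (g ^ (p.1 + p.2)))
      = (if n = 0 then 1 else 0 : ℂ) • PowerSeries.coeff r (g ^ n) := by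
    intro n _
    have : ∀ p ∈ Finset.HasAntidiagonal.antidiagonal n,
        (((p.1.factorial : ℂ)⁻¹ * (p.2.factorial : ℂ)⁻¹) * (-1 : ℂ) ^ p.2) •
          PowerSeries.coeff r (g ^ (p.1 + p.2))
        = (((p.1.factorial : ℂ)⁻¹ * (p.2.factorial : ℂ)⁻¹) * (-1 : ℂ) ^ p.2) •
          PowerSeries.coeff r (g ^ n) := by
      rintro ⟨a, b⟩ hab
      rw [Finset.HasAntidiagonal.mem_antidiagonal] at hab
      rw [hab]
    rw [Finset.sum_congr rfl this, ← Finset.sum_smul]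
    congr 1
    -- scalar identity
    rw [Finset.Nat.sum_antidiagonal_eq_sum_range_succ_mk]
    have key : ∀ j ∈ Finset.range (n+1),
        (((j : ℕ).factorial : ℂ)⁻¹ * (((n - j : ℕ)).factorial : ℂ)⁻¹) * (-1:ℂ) ^ (n - j)
        = (n.factorial : ℂ)⁻¹ * ((-1:ℂ)^n * ((-1:ℂ) ^ j * (n.choose j : ℂ))) := by
      intro j hj
      rw [Finset.mem_range] at hj
      have hle : j ≤ n := by omega
      rw [Nat.cast_choose ℂ hle]
      have h1 : ((j.factorial : ℂ)) ≠ 0 := Nat.cast_ne_zero.2 (Nat.factorial_ne_zero j)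
      have h2 : (((n-j).factorial : ℂ)) ≠ 0 := Nat.cast_ne_zero.2 (Nat.factorial_ne_zero _)
      have h3 : ((n.factorial : ℂ)) ≠ 0 := Nat.cast_ne_zero.2 (Nat.factorial_ne_zero n)
      have hsgn : (-1:ℂ) ^ (n - j) = (-1:ℂ)^n * (-1:ℂ)^j := by
        have h4 : n - j + j = n := by omega
        have h5 : (-1:ℂ)^n = (-1:ℂ)^(n-j) * (-1:ℂ)^j := by rw [← pow_add, h4]
        rw [h5, mul_assoc, ← pow_add, ← two_mul, pow_mul]
        norm_num
      rw [hsgn]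
      field_simp
    rw [Finset.sum_congr rfl key, ← Finset.mul_sum, ← Finset.mul_sum]
    have : ∑ j ∈ Finset.range (n+1), (-1:ℂ) ^ j * (n.choose j : ℂ)
        = if n = 0 then 1 else 0 := by
      have := Int.alternating_sum_range_choose (n := n)
      have := congrArg (fun z : ℤ => (z : ℂ)) this
      push_cast at this
      rw [← this]
    rw [this]
    rcases eq_or_ne n 0 with h | h
    · subst h; norm_num
    · simp [h]
  rw [Finset.sum_congr rfl inner]
  rw [Finset.sum_eq_single_of_mem 0 (Finset.mem_range.2 (by omega)) ?other]
  case other =>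
    intro b _ hb
    rw [if_neg hb, zero_smul]
  rw [if_pos rfl, one_smul, pow_zero, PowerSeries.coeff_one]

end ZAux

namespace ZAux

/-- weight of a monomial, as a natural number -/
def wt (μ : ℕ+ →₀ ℕ) : ℕ := μ.sum fun n a => (n : ℕ) * a

/-- `f` has all monomials of weight at most `W` -/
def WLE (W : ℕ) (f : Fock) : Prop := ∀ μ ∈ f.support, wt μ ≤ W

lemma wle_exists (f : Fock) : WLE (f.support.sup wt) f := fun μ hμ => Finset.le_sup hμ

lemma wle_mono {W W' : ℕ} (h : W ≤ W') {f : Fock} (hf : WLE W f) : WLE W' f :=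
  fun μ hμ => le_trans (hf μ hμ) h

lemma wt_add_single (ν : ℕ+ →₀ ℕ) (n : ℕ+) : wt (ν + Finsupp.single n 1) = wt ν + (n : ℕ) := by
  unfold wt
  rw [Finsupp.sum_add_index']
  · rw [Finsupp.sum_single_index]
    · ring
    · ring
  · intro a; ring
  · intro a b c; ring

lemma wle_pderiv {W : ℕ} {f : Fock} (hf : WLE W f) (n : ℕ+) :
    ∀ μ ∈ (pderiv n f).support, wt μ + (n : ℕ) ≤ W := by
  intro μ hμ
  have hrep := MvPolynomial.as_sum f
  have : pderiv n f = ∑ ν ∈ f.support, pderiv n (monomial ν (coeff ν f)) := by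
    conv_lhs => rw [hrep]
    rw [map_sum]
  rw [this] at hμ
  classical
  obtain ⟨ν, hν, hμν⟩ := Finset.mem_biUnion.1 (MvPolynomial.support_sum hμ)
  rw [pderiv_monomial] at hμν
  have hsupp := MvPolynomial.support_monomial_subset hμν
  rw [Finset.mem_singleton] at hsupp
  subst hsupp
  have hcoeff : coeff ν f * (ν n : ℂ) ≠ 0 := by
    intro h
    rw [h] at hμν
    simp at hμν
  have hνn : ν n ≠ 0 := by
    intro h
    rw [h] at hcoeff
    simp at hcoeff
  have heq : (ν - Finsupp.single n 1) + Finsupp.single n 1 = ν := by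
    ext x
    simp only [Finsupp.coe_add, Finsupp.coe_tsub, Pi.add_apply, Pi.sub_apply]
    rcases eq_or_ne x n with h | h
    · subst h; simp only [Finsupp.single_eq_same]; omega
    · simp [Finsupp.single_eq_of_ne' (Ne.symm h)]
  calc wt (ν - Finsupp.single n 1) + (n : ℕ)
      = wt ((ν - Finsupp.single n 1) + Finsupp.single n 1) := (wt_add_single _ _).symm
    _ = wt ν := by rw [heq]
    _ ≤ W := hf ν hν

lemma coeff_cSeries (ε : Bool) (n : ℕ) (hn : 0 < n) :
    PowerSeries.coeff n (cSeries ε) =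
      sgn ε • ((2 : ℂ) • (pderiv (⟨n, hn⟩ : ℕ+)).toLinearMap) := by
  rw [cSeries, PowerSeries.coeff_mk, dif_pos hn]

lemma coeff_cSeries_zero (ε : Bool) : PowerSeries.constantCoeff (cSeries ε) = 0 := by
  rw [← PowerSeries.coeff_zero_eq_constantCoeff, cSeries, PowerSeries.coeff_mk, dif_neg (by omega)]

lemma coeff_dSeries_zero (ε : Bool) : PowerSeries.constantCoeff (dSeries ε) = 0 := by
  rw [← PowerSeries.coeff_zero_eq_constantCoeff, dSeries, PowerSeries.coeff_mk, dif_neg (by omega)]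

lemma dSeries_true : dSeries true = - dSeries false := by
  refine PowerSeries.ext fun n => ?_
  rw [map_neg, dSeries, dSeries, PowerSeries.coeff_mk, PowerSeries.coeff_mk]
  split_ifs with h
  · show (-1 : ℂ) • _ = -((1 : ℂ) • _)
    module
  · rw [neg_zero]

lemma cSeries_false : cSeries false = - cSeries true := by
  refine PowerSeries.ext fun n => ?_
  rw [map_neg, cSeries, cSeries, PowerSeries.coeff_mk, PowerSeries.coeff_mk]
  split_ifs with h
  · show (1 : ℂ) • _ = -((-1 : ℂ) • _)
    module
  · rw [neg_zero]

lemma coeffPow_wle (ε : Bool) :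
    ∀ (j W k : ℕ) (f : Fock), WLE W f →
      ∀ μ ∈ ((PowerSeries.coeff k ((cSeries ε) ^ j)) f).support, wt μ + k ≤ W := by
  intro j
  induction j with
  | zero =>
    intro W k f hf μ hμ
    rw [pow_zero, PowerSeries.coeff_one] at hμ
    rcases eq_or_ne k 0 with h | h
    · subst h
      rw [if_pos rfl] at hμ
      exact le_of_eq_of_le (by ring) (hf μ hμ)
    · rw [if_neg h] at hμ
      simp at hμ
  | succ j ih =>
    intro W k f hf μ hμ
    rw [pow_succ, PowerSeries.coeff_mul] at hμ
    rw [LinearMap.coe_sum, Finset.sum_apply] at hμ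
    classical
    obtain ⟨⟨v, u⟩, hvu, hμ2⟩ := Finset.mem_biUnion.1 (MvPolynomial.support_sum hμ)
    rw [Finset.HasAntidiagonal.mem_antidiagonal] at hvu
    rw [Module.End.mul_apply] at hμ2
    rcases Nat.eq_zero_or_pos u with hu | hu
    · subst hu
      have : PowerSeries.coeff 0 (cSeries ε) = 0 := by
        rw [PowerSeries.coeff_zero_eq_constantCoeff, coeff_cSeries_zero]
      rw [this] at hμ2
      simp at hμ2
    · rw [coeff_cSeries ε u hu] at hμ2
      have hμ2 : μ ∈ MvPolynomial.support ((PowerSeries.coeff v (cSeries ε ^ j))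
          ((sgn ε • ((2:ℂ) • ((pderiv (⟨u, hu⟩ : ℕ+)).toLinearMap f))) : Fock)) := hμ2
      -- the inner applied polynomial
      have hg1supp : ∀ ν ∈ ((sgn ε • ((2:ℂ) •
          ((pderiv (⟨u, hu⟩ : ℕ+)).toLinearMap f))) : Fock).support,
          wt ν + u ≤ W := by
        intro ν hν
        rw [smul_smul] at hν
        have := MvPolynomial.support_smul hν
        exact wle_pderiv hf ⟨u, hu⟩ ν this
      rcases le_or_gt u W with huW | huW
      · have hwle : WLE (W - u) ((sgn ε • ((2:ℂ) •
            ((pderiv (⟨u, hu⟩ : ℕ+)).toLinearMap f))) : Fock) := by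
          intro ν hν
          have := hg1supp ν hν
          omega
        have := ih (W - u) v _ hwle μ hμ2
        omega
      · have hz : ((sgn ε • ((2:ℂ) • ((pderiv (⟨u, hu⟩ : ℕ+)).toLinearMap f))) : Fock) = 0 := by
          rw [← MvPolynomial.support_eq_empty]
          rw [Finset.eq_empty_iff_forall_notMem]
          intro ν hν
          have := hg1supp ν hν
          omega
        have h0 : (PowerSeries.coeff v (cSeries ε ^ j)) ((sgn ε • ((2:ℂ) • ((pderiv (⟨u, hu⟩ : ℕ+)).toLinearMap f))) : Fock) = 0 := by
          rw [hz]; exact map_zero _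
        rw [h0] at hμ2
        simp at hμ2

lemma cOp_wle {W : ℕ} {f : Fock} (hf : WLE W f) (ε : Bool) (k : ℕ) :
    ∀ μ ∈ (cOp ε k f).support, wt μ + k ≤ W := by
  intro μ hμ
  rw [cOp, expCoeff] at hμ
  rw [LinearMap.coe_sum, Finset.sum_apply] at hμ
  classical
  obtain ⟨j, _, hμ2⟩ := Finset.mem_biUnion.1 (MvPolynomial.support_sum hμ)
  rw [LinearMap.smul_apply] at hμ2
  have := MvPolynomial.support_smul hμ2
  exact coeffPow_wle ε j W k f hf μ this

lemma cOp_eq_zero {W : ℕ} {f : Fock} (hf : WLE W f) (ε : Bool) {k : ℕ} (hk : W < k) :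
    cOp ε k f = 0 := by
  rw [← MvPolynomial.support_eq_empty, Finset.eq_empty_iff_forall_notMem]
  intro μ hμ
  have := cOp_wle hf ε k μ hμ
  omega

lemma cOp_cOp_eq_zero {W : ℕ} {f : Fock} (hf : WLE W f) (ε ε' : Bool) {k b : ℕ}
    (hk : W < k + b) : cOp ε k (cOp ε' b f) = 0 := by
  rcases le_or_gt b W with hbW | hbW
  · have : WLE (W - b) (cOp ε' b f) := by
      intro ν hν
      have := cOp_wle hf ε' b ν hν
      omega
    exact cOp_eq_zero this ε (by omega)
  · rw [cOp_eq_zero hf ε' hbW, map_zero]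

end ZAux

namespace ZAux

lemma floor_half (z : ℤ) : ⌊(z : ℚ) - 1/2⌋ = z - 1 := by
  rw [Int.floor_eq_iff] <;> push_cast <;> try constructor
  all_goals linarith

lemma Abasis_bound (m : ℚ) (ST : Finset ℕ+ × Finset ℕ+)
    (h : ((ST.2.sup fun t => (t : ℕ) : ℕ) : ℤ) < ⌊m⌋) : Abasis m ST = 0 := by
  rw [Abasis]
  split_ifs with hden
  · rw [dif_pos (show (1:ℤ) ≤ ⌊m⌋ by omega), if_neg]
    intro hk
    have hle := Finset.le_sup (f := fun t : ℕ+ => (t : ℕ)) hk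
    have hle2 : ⌊m⌋.toNat ≤ ST.2.sup (fun t => (t : ℕ)) := hle
    omega
  · rfl

lemma AstarBasis_bound (m : ℚ) (ST : Finset ℕ+ × Finset ℕ+)
    (h : ((ST.1.sup fun t => (t : ℕ) : ℕ) : ℤ) < ⌊m⌋) : AstarBasis m ST = 0 := by
  rw [AstarBasis]
  split_ifs with hden
  · rw [dif_pos (show (1:ℤ) ≤ ⌊m⌋ by omega), if_neg]
    intro hk
    have hle := Finset.le_sup (f := fun t : ℕ+ => (t : ℕ)) hk
    have hle2 : ⌊m⌋.toNat ≤ ST.1.sup (fun t => (t : ℕ)) := hle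
    omega
  · rfl

lemma emb_zero (w : Wedge) (q : ℤ) : emb w q 0 = 0 := by
  rw [emb]
  apply Finset.sum_eq_zero
  intro ST _
  simp

lemma emb_zero' (q : ℤ) (f : Fock) : emb 0 q f = 0 := by
  rw [emb, Finsupp.sum_zero_index]

lemma emb_add (w : Wedge) (q : ℤ) (f g : Fock) : emb w q (f + g) = emb w q f + emb w q g := by
  rw [emb, emb, emb]
  rw [show (fun (ST : Finset ℕ+ × Finset ℕ+) (c : ℂ) => Finsupp.single (ST, q) (c • (f + g)))
      = fun ST c => Finsupp.single (ST, q) (c • f) + Finsupp.single (ST, q) (c • g) from ?_]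
  · exact Finsupp.sum_add
  · funext ST c
    rw [smul_add, Finsupp.single_add]

/-- `emb w q` as an additive monoid hom in `f`. -/
noncomputable def embHom (w : Wedge) (q : ℤ) : Fock →+ VV :=
  AddMonoidHom.mk' (fun f => emb w q f) (emb_add w q)

lemma extF_single (e : EndF) (x : (Finset ℕ+ × Finset ℕ+) × ℤ) (f : Fock) :
    extF e (Finsupp.single x f) = Finsupp.single x (e f) := by
  rw [extF, Finsupp.sum_single_index]
  rw [map_zero, Finsupp.single_zero]

lemma extF_add (e : EndF) (u v : VV) : extF e (u + v) = extF e u + extF e v := by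
  rw [extF, extF, extF]
  apply Finsupp.sum_add_index'
  · intro a
    rw [map_zero, Finsupp.single_zero]
  · intro a b c
    rw [map_add, Finsupp.single_add]

/-- `extF e` as an additive monoid hom. -/
noncomputable def extFHom (e : EndF) : VV →+ VV :=
  AddMonoidHom.mk' (fun u => extF e u) (extF_add e)

lemma extF_zero (e : EndF) : extF e 0 = 0 := by
  rw [extF, Finsupp.sum_zero_index]

lemma extF_emb (e : EndF) (w : Wedge) (q : ℤ) (f : Fock) :
    extF e (emb w q f) = emb w q (e f) := by
  rw [emb, Finsupp.sum]
  rw [show extF e = ⇑(extFHom e) from rfl, map_sum]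
  rw [emb, Finsupp.sum]
  refine Finset.sum_congr rfl fun ST _ => ?_
  show extF e (Finsupp.single (ST, q) (w ST • f)) = Finsupp.single (ST, q) (w ST • e f)
  rw [extF_single, map_smul]

lemma emb_sum {α : Type*} (w : Wedge) (q : ℤ) (s : Finset α) (h : α → Fock) :
    emb w q (∑ i ∈ s, h i) = ∑ i ∈ s, emb w q (h i) := map_sum (embHom w q) h s

end ZAux

namespace ZAux

lemma embA_congr {q1 q2 : ℚ} (h : q1 = q2) (ST : Finset ℕ+ × Finset ℕ+) (c : ℤ) (x : Fock) :
    emb (Abasis q1 ST) c x = emb (Abasis q2 ST) c x := by rw [h]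

lemma embAs_congr {q1 q2 : ℚ} (h : q1 = q2) (ST : Finset ℕ+ × Finset ℕ+) (c : ℤ) (x : Fock) :
    emb (AstarBasis q1 ST) c x = emb (AstarBasis q2 ST) c x := by rw [h]

end ZAux

namespace ZAux

lemma dOp_eq (ε : Bool) (l : ℕ) : dOp ε l = expCoeff (dSeries ε) l := rfl
lemma cOp_eq (ε : Bool) (l : ℕ) : cOp ε l = expCoeff (cSeries ε) l := rfl

lemma dSeries_false : dSeries false = -(dSeries true) := by rw [dSeries_true, neg_neg]
lemma cSeries_true : cSeries true = -(cSeries false) := by rw [cSeries_false, neg_neg]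

lemma conv_applied {g : PowerSeries EndF} (hg : PowerSeries.constantCoeff g = 0)
    (r : ℕ) (f : Fock) :
    ∑ p ∈ Finset.HasAntidiagonal.antidiagonal r, (expCoeff g p.1) ((expCoeff (-g) p.2) f) =
      if r = 0 then f else 0 := by
  have h1 : ∀ p ∈ Finset.HasAntidiagonal.antidiagonal r, (expCoeff g p.1) ((expCoeff (-g) p.2) f)
      = (expCoeff g p.1 * expCoeff (-g) p.2) f := by
    intro p _
    rw [Module.End.mul_apply]
  rw [Finset.sum_congr rfl h1, ← LinearMap.sum_apply, conv_key g hg r]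
  split_ifs
  · rw [Module.End.one_apply]
  · rw [LinearMap.zero_apply]

lemma conv_d_plus (r : ℕ) (f : Fock) :
    ∑ p ∈ Finset.HasAntidiagonal.antidiagonal r, dOp false p.1 (dOp true p.2 f) =
      if r = 0 then f else 0 := by
  have := conv_applied (coeff_dSeries_zero false) r f
  rw [← dSeries_true] at this
  exact this

lemma conv_d_minus (r : ℕ) (f : Fock) :
    ∑ p ∈ Finset.HasAntidiagonal.antidiagonal r, dOp true p.1 (dOp false p.2 f) =
      if r = 0 then f else 0 := by
  have := conv_applied (coeff_dSeries_zero true) r f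
  rw [← dSeries_false] at this
  exact this

lemma conv_c_plus (s : ℕ) (f : Fock) :
    ∑ p ∈ Finset.HasAntidiagonal.antidiagonal s, cOp true p.1 (cOp false p.2 f) =
      if s = 0 then f else 0 := by
  have := conv_applied (coeff_cSeries_zero true) s f
  rw [← cSeries_false] at this
  exact this

lemma conv_c_minus (s : ℕ) (f : Fock) :
    ∑ p ∈ Finset.HasAntidiagonal.antidiagonal s, cOp false p.1 (cOp true p.2 f) =
      if s = 0 then f else 0 := by
  have := conv_applied (coeff_cSeries_zero false) s f
  rw [← cSeries_true] at this
  exact this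

/-- supremum of `T` as an integer bound -/
def bT (T : Finset ℕ+) : ℤ := ((T.sup fun t => (t : ℕ) : ℕ) : ℤ)

lemma Zp_vanish (m : ℤ) (ST : Finset ℕ+ × Finset ℕ+) (p : ℤ) (f : Fock) (W : ℕ)
    (hf : WLE W f) (a b l k : ℕ)
    (h : W < b + k ∨ bT ST.2 + 1 + (b : ℤ) + k + p - m < (a : ℤ) + l) :
    emb (Abasis ((m : ℚ) + a - b + l - k - p - 1/2) ST) (p + 1)
      (dOp false a (dOp true l (cOp true k (cOp false b f)))) = 0 := by
  rcases h with h | h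
  · rw [cOp_cOp_eq_zero hf true false (k := k) (b := b) (by omega), map_zero, map_zero, emb_zero]
  · rw [Abasis_bound, emb_zero']
    rw [show (m : ℚ) + a - b + l - k - p - 1/2
        = ((m + a - b + l - k - p : ℤ) : ℚ) - 1/2 by push_cast; ring, floor_half]
    rw [bT] at h
    omega

lemma Zm_vanish (m : ℤ) (ST : Finset ℕ+ × Finset ℕ+) (p : ℤ) (f : Fock) (W : ℕ)
    (hf : WLE W f) (a b l k : ℕ)
    (h : W < b + k ∨ bT ST.1 + 1 + (b : ℤ) + k - p - m < (a : ℤ) + l) :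
    emb (AstarBasis ((m : ℚ) + a - b + l - k + p - 1/2) ST) (p - 1)
      (dOp true a (dOp false l (cOp false k (cOp true b f)))) = 0 := by
  rcases h with h | h
  · rw [cOp_cOp_eq_zero hf false true (k := k) (b := b) (by omega), map_zero, map_zero, emb_zero]
  · rw [AstarBasis_bound, emb_zero']
    rw [show (m : ℚ) + a - b + l - k + p - 1/2
        = ((m + a - b + l - k + p : ℤ) : ℚ) - 1/2 by push_cast; ring, floor_half]
    rw [bT] at h
    omega

end ZAux

namespace ZAux

lemma X_vanish (m' : ℤ) (ST : Finset ℕ+ × Finset ℕ+) (p : ℤ) (f : Fock) (W : ℕ)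
    (hf : WLE W f) (l k : ℕ)
    (h : W < k ∨ bT ST.2 + 1 + (k : ℤ) + p - m' < l) :
    emb (Abasis ((m' : ℚ) + l - k - p - 1/2) ST) (p + 1) (dOp true l (cOp true k f)) = 0 := by
  rcases h with h | h
  · rw [cOp_eq_zero hf true h, map_zero, emb_zero]
  · rw [Abasis_bound, emb_zero']
    rw [show (m' : ℚ) + l - k - p - 1/2 = ((m' + l - k - p : ℤ) : ℚ) - 1/2 by push_cast; ring,
      floor_half]
    rw [bT] at h
    omega

lemma Y_vanish (m' : ℤ) (ST : Finset ℕ+ × Finset ℕ+) (p : ℤ) (f : Fock) (W : ℕ)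
    (hf : WLE W f) (l k : ℕ)
    (h : W < k ∨ bT ST.1 + 1 + (k : ℤ) - p - m' < l) :
    emb (AstarBasis ((m' : ℚ) + l - k + p - 1/2) ST) (p - 1) (dOp false l (cOp false k f)) = 0 := by
  rcases h with h | h
  · rw [cOp_eq_zero hf false h, map_zero, emb_zero]
  · rw [AstarBasis_bound, emb_zero']
    rw [show (m' : ℚ) + l - k + p - 1/2 = ((m' + l - k + p : ℤ) : ℚ) - 1/2 by push_cast; ring,
      floor_half]
    rw [bT] at h
    omega

lemma suppX (m' : ℤ) (ST : Finset ℕ+ × Finset ℕ+) (p : ℤ) (f : Fock) :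
    (Function.support fun lk : ℕ × ℕ =>
      emb (Abasis ((m' : ℚ) + lk.1 - lk.2 - p - 1/2) ST) (p + 1)
        (dOp true lk.1 (cOp true lk.2 f))).Finite := by
  classical
  set W := f.support.sup wt with hWdef
  have hW : WLE W f := wle_exists f
  set N : ℕ := max (W + 1) ((bT ST.2 + 1 + (W : ℤ) + p - m').toNat + 1) with hN
  apply Set.Finite.subset (Finset.range N ×ˢ Finset.range N).finite_toSet
  intro lk hlk
  simp only [Finset.coe_product, Set.mem_prod, Finset.mem_coe, Finset.mem_range]
  by_contra hc
  push_neg at hc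
  apply hlk
  rcases le_or_gt lk.2 W with hk | hk
  · -- k small, so l must be large
    have hl : N ≤ lk.1 ∨ N ≤ lk.2 := by omega
    rcases hl with hl | hl
    · exact X_vanish m' ST p f W hW lk.1 lk.2 (Or.inr (by omega))
    · exact X_vanish m' ST p f W hW lk.1 lk.2 (Or.inl (by omega))
  · exact X_vanish m' ST p f W hW lk.1 lk.2 (Or.inl hk)

lemma suppY (m' : ℤ) (ST : Finset ℕ+ × Finset ℕ+) (p : ℤ) (f : Fock) :
    (Function.support fun lk : ℕ × ℕ =>
      emb (AstarBasis ((m' : ℚ) + lk.1 - lk.2 + p - 1/2) ST) (p - 1)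
        (dOp false lk.1 (cOp false lk.2 f))).Finite := by
  classical
  set W := f.support.sup wt with hWdef
  have hW : WLE W f := wle_exists f
  set N : ℕ := max (W + 1) ((bT ST.1 + 1 + (W : ℤ) - p - m').toNat + 1) with hN
  apply Set.Finite.subset (Finset.range N ×ˢ Finset.range N).finite_toSet
  intro lk hlk
  simp only [Finset.coe_product, Set.mem_prod, Finset.mem_coe, Finset.mem_range]
  by_contra hc
  push_neg at hc
  apply hlk
  rcases le_or_gt lk.2 W with hk | hk
  · have hl : N ≤ lk.1 ∨ N ≤ lk.2 := by omega
    rcases hl with hl | hl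
    · exact Y_vanish m' ST p f W hW lk.1 lk.2 (Or.inr (by omega))
    · exact Y_vanish m' ST p f W hW lk.1 lk.2 (Or.inl (by omega))
  · exact Y_vanish m' ST p f W hW lk.1 lk.2 (Or.inl hk)

lemma Xop_single (m' : ℤ) (STp : (Finset ℕ+ × Finset ℕ+) × ℤ) (f : Fock) :
    Xop m' (Finsupp.single STp f) =
      ∑ᶠ lk : ℕ × ℕ,
        emb (Abasis ((m' : ℚ) + lk.1 - lk.2 - STp.2 - 1/2) STp.1) (STp.2 + 1)
          (dOp true lk.1 (cOp true lk.2 f)) := by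
  simp only [Xop]
  rw [Finsupp.sum_single_index]
  have h : ∀ lk : ℕ × ℕ,
      emb (Abasis ((m' : ℚ) + lk.1 - lk.2 - STp.2 - 1/2) STp.1) (STp.2 + 1)
        (dOp true lk.1 (cOp true lk.2 (0 : Fock))) = 0 := by
    intro lk
    rw [map_zero, map_zero, emb_zero]
  rw [finsum_congr h, finsum_zero]

lemma Yop_single (m' : ℤ) (STp : (Finset ℕ+ × Finset ℕ+) × ℤ) (f : Fock) :
    Yop m' (Finsupp.single STp f) =
      ∑ᶠ lk : ℕ × ℕ,
        emb (AstarBasis ((m' : ℚ) + lk.1 - lk.2 + STp.2 - 1/2) STp.1) (STp.2 - 1)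
          (dOp false lk.1 (cOp false lk.2 f)) := by
  simp only [Yop]
  rw [Finsupp.sum_single_index]
  have h : ∀ lk : ℕ × ℕ,
      emb (AstarBasis ((m' : ℚ) + lk.1 - lk.2 + STp.2 - 1/2) STp.1) (STp.2 - 1)
        (dOp false lk.1 (cOp false lk.2 (0 : Fock))) = 0 := by
    intro lk
    rw [map_zero, map_zero, emb_zero]
  rw [finsum_congr h, finsum_zero]

end ZAux

namespace ZAux

lemma ZplusV_single (m : ℤ) (S T : Finset ℕ+) (p : ℤ) (f : Fock) :
    ZplusV m (Finsupp.single ((S, T), p) f) =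
      emb (Abasis ((m : ℚ) - p - 1/2) (S, T)) (p + 1) f := by
  classical
  set W := f.support.sup wt with hWdef
  have hW : WLE W f := wle_exists f
  set N : ℕ := max (W + 1) ((bT T + 1 + 2 * (W : ℤ) + p - m).toNat + 1) with hNdef
  have hNW : (W : ℤ) < N := by
    have : W + 1 ≤ N := le_max_left _ _
    omega
  have hNb : bT T + 1 + 2 * (W : ℤ) + p - m < N := by
    have h1 : (bT T + 1 + 2 * (W : ℤ) + p - m).toNat + 1 ≤ N := le_max_right _ _
    omega
  have hN0 : 0 < N := by omega
  -- the general 4-index term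
  set G : ℕ × ℕ → ℕ × ℕ → VV := fun ab lk =>
    emb (Abasis ((m : ℚ) + ab.1 - ab.2 + lk.1 - lk.2 - p - 1/2) (S, T)) (p + 1)
      (dOp false ab.1 (dOp true lk.1 (cOp true lk.2 (cOp false ab.2 f)))) with hGdef
  have hGvan : ∀ a b l k : ℕ, (W < b + k ∨ bT T + 1 + (b : ℤ) + k + p - m < (a : ℤ) + l) →
      G (a, b) (l, k) = 0 := by
    intro a b l k h
    exact Zp_vanish m (S, T) p f W hW a b l k h
  have hterm : ∀ ab : ℕ × ℕ,
      extF (dOp false ab.1) (Xop (m + ab.1 - ab.2)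
        (extF (cOp false ab.2) (Finsupp.single ((S, T), p) f)))
      = ∑ᶠ lk : ℕ × ℕ, G ab lk := by
    intro ab
    rw [extF_single, Xop_single]
    rw [show extF (dOp false ab.1) = ⇑(extFHom (dOp false ab.1)) from rfl]
    rw [AddMonoidHom.map_finsum _ (suppX (m + ab.1 - ab.2) (S, T) p (cOp false ab.2 f))]
    refine finsum_congr fun lk => ?_
    show extF (dOp false ab.1) _ = _
    rw [extF_emb]
    simp only [hGdef]
    exact embA_congr (by push_cast; ring) _ _ _
  rw [ZplusV, finsum_congr hterm]
  -- collapse inner finsum to a box sum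
  have hin : ∀ ab : ℕ × ℕ, ∑ᶠ lk : ℕ × ℕ, G ab lk =
      ∑ lk ∈ Finset.range N ×ˢ Finset.range N, G ab lk := by
    intro ab
    apply finsum_eq_sum_of_support_subset
    intro lk hlk
    simp only [Finset.coe_product, Set.mem_prod, Finset.mem_coe, Finset.mem_range]
    by_contra hc
    push_neg at hc
    apply hlk
    show G (ab.1, ab.2) (lk.1, lk.2) = 0
    rcases le_or_gt (ab.2 + lk.2) W with hk | hk
    · have : N ≤ lk.1 ∨ N ≤ lk.2 := by omega
      rcases this with hl | hl
      · exact hGvan _ _ _ _ (Or.inr (by rw [bT] at hNb ⊢; omega))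
      · exact hGvan _ _ _ _ (Or.inl (by omega))
    · exact hGvan _ _ _ _ (Or.inl hk)
  rw [finsum_congr hin]
  -- collapse outer finsum to a box sum
  rw [finsum_eq_sum_of_support_subset _ (s := Finset.range N ×ˢ Finset.range N) ?hsub]
  case hsub =>
    intro ab hab
    simp only [Finset.coe_product, Set.mem_prod, Finset.mem_coe, Finset.mem_range]
    by_contra hc
    push_neg at hc
    apply hab
    show (∑ lk ∈ Finset.range N ×ˢ Finset.range N, G (ab.1, ab.2) lk) = 0
    apply Finset.sum_eq_zero
    rintro ⟨l, k⟩ _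
    rcases le_or_gt (ab.2 + k) W with hk | hk
    · have : N ≤ ab.1 ∨ N ≤ ab.2 := by omega
      rcases this with hl | hl
      · exact hGvan _ _ _ _ (Or.inr (by rw [bT] at hNb ⊢; omega))
      · exact hGvan _ _ _ _ (Or.inl (by omega))
    · exact hGvan _ _ _ _ (Or.inl hk)
  -- now a finite double sum over boxes
  rw [Finset.sum_product]
  -- disjointness of antidiagonals
  have hdisj : (↑(Finset.range N) : Set ℕ).PairwiseDisjoint
      (fun n => (Finset.HasAntidiagonal.antidiagonal n : Finset (ℕ × ℕ))) := by
    intro x _ y _ hxy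
    simp only [Finset.disjoint_left]
    intro q hqx hqy
    rw [Finset.HasAntidiagonal.mem_antidiagonal] at hqx hqy
    exact hxy (by omega)
  have hsubBU : (Finset.range N).biUnion (fun n => Finset.HasAntidiagonal.antidiagonal n)
      ⊆ Finset.range N ×ˢ Finset.range N := by
    intro q hq
    simp only [Finset.mem_biUnion, Finset.mem_range, Finset.HasAntidiagonal.mem_antidiagonal] at hq
    obtain ⟨n, hn, hqn⟩ := hq
    simp only [Finset.mem_product, Finset.mem_range]
    omega
  -- collapse the (b,k) double sum
  have hbk : ∀ a l : ℕ, (∑ b ∈ Finset.range N, ∑ k ∈ Finset.range N, G (a, b) (l, k))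
      = emb (Abasis ((m : ℚ) + a + l - p - 1/2) (S, T)) (p + 1)
          (dOp false a (dOp true l f)) := by
    intro a l
    rw [← Finset.sum_product' (f := fun b k => G (a, b) (l, k))]
    rw [← Finset.sum_subset hsubBU ?van1]
    case van1 =>
      rintro ⟨b, k⟩ hbox hnot
      have hbk2 : N ≤ b + k := by
        by_contra hcon
        exact hnot (Finset.mem_biUnion.2 ⟨b + k, Finset.mem_range.2 (by omega),
          Finset.HasAntidiagonal.mem_antidiagonal.2 rfl⟩)
      exact hGvan a b l k (Or.inl (by omega))
    rw [Finset.sum_biUnion hdisj]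
    have hinner : ∀ s ∈ Finset.range N,
        (∑ x ∈ Finset.HasAntidiagonal.antidiagonal s, G (a, x.1) (l, x.2))
        = emb (Abasis ((m : ℚ) + a + l - s - p - 1/2) (S, T)) (p + 1)
            (dOp false a (dOp true l (if s = 0 then f else 0))) := by
      intro s _
      have hcongr : ∀ x ∈ Finset.HasAntidiagonal.antidiagonal s, G (a, x.1) (l, x.2)
          = emb (Abasis ((m : ℚ) + a + l - s - p - 1/2) (S, T)) (p + 1)
              (dOp false a (dOp true l (cOp true x.2 (cOp false x.1 f)))) := by
        rintro ⟨b, k⟩ hx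
        rw [Finset.HasAntidiagonal.mem_antidiagonal] at hx
        simp only [hGdef]
        have hq : (b : ℚ) + (k : ℚ) = (s : ℚ) := by exact_mod_cast congrArg (Nat.cast : ℕ → ℚ) hx
        exact embA_congr (by linarith) _ _ _
      rw [Finset.sum_congr rfl hcongr, ← emb_sum, ← map_sum, ← map_sum]
      refine congrArg (fun x => emb (Abasis ((m : ℚ) + a + l - s - p - 1/2) (S, T)) (p + 1)
        (dOp false a (dOp true l x))) ?_
      have hswap := Finset.Nat.sum_antidiagonal_swap
        (n := s) (f := fun q : ℕ × ℕ => cOp true q.1 (cOp false q.2 f))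
      refine Eq.trans ?_ (hswap.trans (conv_c_plus s f))
      rfl
    rw [Finset.sum_congr rfl hinner]
    rw [Finset.sum_eq_single_of_mem 0 (Finset.mem_range.2 hN0) ?other]
    case other =>
      intro s _ hs
      rw [if_neg hs, map_zero, map_zero, emb_zero]
    rw [if_pos rfl]
    exact embA_congr (by push_cast; ring) _ _ _
  have hkey : ∀ a ∈ Finset.range N,
      (∑ b ∈ Finset.range N, ∑ lk ∈ Finset.range N ×ˢ Finset.range N, G (a, b) lk)
      = ∑ l ∈ Finset.range N, emb (Abasis ((m : ℚ) + a + l - p - 1/2) (S, T)) (p + 1)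
          (dOp false a (dOp true l f)) := by
    intro a _
    have h1 : ∀ b ∈ Finset.range N, (∑ lk ∈ Finset.range N ×ˢ Finset.range N, G (a, b) lk)
        = ∑ l ∈ Finset.range N, ∑ k ∈ Finset.range N, G (a, b) (l, k) := by
      intro b _
      rw [Finset.sum_product]
    rw [Finset.sum_congr rfl h1, Finset.sum_comm]
    exact Finset.sum_congr rfl fun l _ => hbk a l
  rw [Finset.sum_congr rfl hkey]
  -- now collapse the (a,l) double sum
  rw [← Finset.sum_product' (f := fun (a l : ℕ) =>
    emb (Abasis ((m : ℚ) + a + l - p - 1/2) (S, T)) (p + 1) (dOp false a (dOp true l f)))]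
  rw [← Finset.sum_subset hsubBU ?van2]
  case van2 =>
    rintro ⟨a, l⟩ hbox hnot
    have hal : N ≤ a + l := by
      by_contra hcon
      exact hnot (Finset.mem_biUnion.2 ⟨a + l, Finset.mem_range.2 (by omega),
        Finset.HasAntidiagonal.mem_antidiagonal.2 rfl⟩)
    rw [Abasis_bound, emb_zero']
    rw [show (m : ℚ) + a + l - p - 1/2 = ((m + a + l - p : ℤ) : ℚ) - 1/2 by push_cast; ring,
      floor_half]
    have hNb' := hNb
    rw [bT] at hNb'
    show ((T.sup fun t => (t : ℕ) : ℕ) : ℤ) < _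
    omega
  rw [Finset.sum_biUnion hdisj]
  have hinner2 : ∀ r ∈ Finset.range N,
      (∑ x ∈ Finset.HasAntidiagonal.antidiagonal r,
        emb (Abasis ((m : ℚ) + x.1 + x.2 - p - 1/2) (S, T)) (p + 1)
          (dOp false x.1 (dOp true x.2 f)))
      = emb (Abasis ((m : ℚ) + r - p - 1/2) (S, T)) (p + 1) (if r = 0 then f else 0) := by
    intro r _
    have hcongr : ∀ x ∈ Finset.HasAntidiagonal.antidiagonal r,
        emb (Abasis ((m : ℚ) + x.1 + x.2 - p - 1/2) (S, T)) (p + 1)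
          (dOp false x.1 (dOp true x.2 f))
        = emb (Abasis ((m : ℚ) + r - p - 1/2) (S, T)) (p + 1)
            (dOp false x.1 (dOp true x.2 f)) := by
      rintro ⟨a, l⟩ hx
      rw [Finset.HasAntidiagonal.mem_antidiagonal] at hx
      have hq : (a : ℚ) + (l : ℚ) = (r : ℚ) := by exact_mod_cast congrArg (Nat.cast : ℕ → ℚ) hx
      exact embA_congr (by linarith) _ _ _
    rw [Finset.sum_congr rfl hcongr, ← emb_sum]
    exact congrArg (fun x => emb (Abasis ((m : ℚ) + r - p - 1/2) (S, T)) (p + 1) x)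
      (conv_d_plus r f)
  rw [Finset.sum_congr rfl hinner2]
  rw [Finset.sum_eq_single_of_mem 0 (Finset.mem_range.2 hN0) ?other2]
  case other2 =>
    intro r _ hr
    rw [if_neg hr, emb_zero]
  rw [if_pos rfl]
  exact embA_congr (by push_cast; ring) _ _ _

end ZAux

namespace ZAux

lemma ZminusV_single (m : ℤ) (S T : Finset ℕ+) (p : ℤ) (f : Fock) :
    ZminusV m (Finsupp.single ((S, T), p) f) =
      emb (AstarBasis ((m : ℚ) + p - 1/2) (S, T)) (p - 1) f := by
  classical
  set W := f.support.sup wt with hWdef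
  have hW : WLE W f := wle_exists f
  set N : ℕ := max (W + 1) ((bT S + 1 + 2 * (W : ℤ) - p - m).toNat + 1) with hNdef
  have hNW : (W : ℤ) < N := by
    have : W + 1 ≤ N := le_max_left _ _
    omega
  have hNb : bT S + 1 + 2 * (W : ℤ) - p - m < N := by
    have h1 : (bT S + 1 + 2 * (W : ℤ) - p - m).toNat + 1 ≤ N := le_max_right _ _
    omega
  have hN0 : 0 < N := by omega
  -- the general 4-index term
  set G : ℕ × ℕ → ℕ × ℕ → VV := fun ab lk =>
    emb (AstarBasis ((m : ℚ) + ab.1 - ab.2 + lk.1 - lk.2 + p - 1/2) (S, T)) (p - 1)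
      (dOp true ab.1 (dOp false lk.1 (cOp false lk.2 (cOp true ab.2 f)))) with hGdef
  have hGvan : ∀ a b l k : ℕ, (W < b + k ∨ bT S + 1 + (b : ℤ) + k - p - m < (a : ℤ) + l) →
      G (a, b) (l, k) = 0 := by
    intro a b l k h
    exact Zm_vanish m (S, T) p f W hW a b l k h
  have hterm : ∀ ab : ℕ × ℕ,
      extF (dOp true ab.1) (Yop (m + ab.1 - ab.2)
        (extF (cOp true ab.2) (Finsupp.single ((S, T), p) f)))
      = ∑ᶠ lk : ℕ × ℕ, G ab lk := by
    intro ab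
    rw [extF_single, Yop_single]
    rw [show extF (dOp true ab.1) = ⇑(extFHom (dOp true ab.1)) from rfl]
    rw [AddMonoidHom.map_finsum _ (suppY (m + ab.1 - ab.2) (S, T) p (cOp true ab.2 f))]
    refine finsum_congr fun lk => ?_
    show extF (dOp true ab.1) _ = _
    rw [extF_emb]
    simp only [hGdef]
    exact embAs_congr (by push_cast; ring) _ _ _
  rw [ZminusV, finsum_congr hterm]
  -- collapse inner finsum to a box sum
  have hin : ∀ ab : ℕ × ℕ, ∑ᶠ lk : ℕ × ℕ, G ab lk =
      ∑ lk ∈ Finset.range N ×ˢ Finset.range N, G ab lk := by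
    intro ab
    apply finsum_eq_sum_of_support_subset
    intro lk hlk
    simp only [Finset.coe_product, Set.mem_prod, Finset.mem_coe, Finset.mem_range]
    by_contra hc
    push_neg at hc
    apply hlk
    show G (ab.1, ab.2) (lk.1, lk.2) = 0
    rcases le_or_gt (ab.2 + lk.2) W with hk | hk
    · have : N ≤ lk.1 ∨ N ≤ lk.2 := by omega
      rcases this with hl | hl
      · exact hGvan _ _ _ _ (Or.inr (by rw [bT] at hNb ⊢; omega))
      · exact hGvan _ _ _ _ (Or.inl (by omega))
    · exact hGvan _ _ _ _ (Or.inl hk)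
  rw [finsum_congr hin]
  -- collapse outer finsum to a box sum
  rw [finsum_eq_sum_of_support_subset _ (s := Finset.range N ×ˢ Finset.range N) ?hsub]
  case hsub =>
    intro ab hab
    simp only [Finset.coe_product, Set.mem_prod, Finset.mem_coe, Finset.mem_range]
    by_contra hc
    push_neg at hc
    apply hab
    show (∑ lk ∈ Finset.range N ×ˢ Finset.range N, G (ab.1, ab.2) lk) = 0
    apply Finset.sum_eq_zero
    rintro ⟨l, k⟩ _
    rcases le_or_gt (ab.2 + k) W with hk | hk
    · have : N ≤ ab.1 ∨ N ≤ ab.2 := by omega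
      rcases this with hl | hl
      · exact hGvan _ _ _ _ (Or.inr (by rw [bT] at hNb ⊢; omega))
      · exact hGvan _ _ _ _ (Or.inl (by omega))
    · exact hGvan _ _ _ _ (Or.inl hk)
  -- now a finite double sum over boxes
  rw [Finset.sum_product]
  -- disjointness of antidiagonals
  have hdisj : (↑(Finset.range N) : Set ℕ).PairwiseDisjoint
      (fun n => (Finset.HasAntidiagonal.antidiagonal n : Finset (ℕ × ℕ))) := by
    intro x _ y _ hxy
    simp only [Finset.disjoint_left]
    intro q hqx hqy
    rw [Finset.HasAntidiagonal.mem_antidiagonal] at hqx hqy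
    exact hxy (by omega)
  have hsubBU : (Finset.range N).biUnion (fun n => Finset.HasAntidiagonal.antidiagonal n)
      ⊆ Finset.range N ×ˢ Finset.range N := by
    intro q hq
    simp only [Finset.mem_biUnion, Finset.mem_range, Finset.HasAntidiagonal.mem_antidiagonal] at hq
    obtain ⟨n, hn, hqn⟩ := hq
    simp only [Finset.mem_product, Finset.mem_range]
    omega
  -- collapse the (b,k) double sum
  have hbk : ∀ a l : ℕ, (∑ b ∈ Finset.range N, ∑ k ∈ Finset.range N, G (a, b) (l, k))
      = emb (AstarBasis ((m : ℚ) + a + l + p - 1/2) (S, T)) (p - 1)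
          (dOp true a (dOp false l f)) := by
    intro a l
    rw [← Finset.sum_product' (f := fun b k => G (a, b) (l, k))]
    rw [← Finset.sum_subset hsubBU ?van1]
    case van1 =>
      rintro ⟨b, k⟩ hbox hnot
      have hbk2 : N ≤ b + k := by
        by_contra hcon
        exact hnot (Finset.mem_biUnion.2 ⟨b + k, Finset.mem_range.2 (by omega),
          Finset.HasAntidiagonal.mem_antidiagonal.2 rfl⟩)
      exact hGvan a b l k (Or.inl (by omega))
    rw [Finset.sum_biUnion hdisj]
    have hinner : ∀ s ∈ Finset.range N,
        (∑ x ∈ Finset.HasAntidiagonal.antidiagonal s, G (a, x.1) (l, x.2))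
        = emb (AstarBasis ((m : ℚ) + a + l - s + p - 1/2) (S, T)) (p - 1)
            (dOp true a (dOp false l (if s = 0 then f else 0))) := by
      intro s _
      have hcongr : ∀ x ∈ Finset.HasAntidiagonal.antidiagonal s, G (a, x.1) (l, x.2)
          = emb (AstarBasis ((m : ℚ) + a + l - s + p - 1/2) (S, T)) (p - 1)
              (dOp true a (dOp false l (cOp false x.2 (cOp true x.1 f)))) := by
        rintro ⟨b, k⟩ hx
        rw [Finset.HasAntidiagonal.mem_antidiagonal] at hx
        simp only [hGdef]
        have hq : (b : ℚ) + (k : ℚ) = (s : ℚ) := by exact_mod_cast congrArg (Nat.cast : ℕ → ℚ) hx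
        exact embAs_congr (by linarith) _ _ _
      rw [Finset.sum_congr rfl hcongr, ← emb_sum, ← map_sum, ← map_sum]
      refine congrArg (fun x => emb (AstarBasis ((m : ℚ) + a + l - s + p - 1/2) (S, T)) (p - 1)
        (dOp true a (dOp false l x))) ?_
      have hswap := Finset.Nat.sum_antidiagonal_swap
        (n := s) (f := fun q : ℕ × ℕ => cOp false q.1 (cOp true q.2 f))
      refine Eq.trans ?_ (hswap.trans (conv_c_minus s f))
      rfl
    rw [Finset.sum_congr rfl hinner]
    rw [Finset.sum_eq_single_of_mem 0 (Finset.mem_range.2 hN0) ?other]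
    case other =>
      intro s _ hs
      rw [if_neg hs, map_zero, map_zero, emb_zero]
    rw [if_pos rfl]
    exact embAs_congr (by push_cast; ring) _ _ _
  have hkey : ∀ a ∈ Finset.range N,
      (∑ b ∈ Finset.range N, ∑ lk ∈ Finset.range N ×ˢ Finset.range N, G (a, b) lk)
      = ∑ l ∈ Finset.range N, emb (AstarBasis ((m : ℚ) + a + l + p - 1/2) (S, T)) (p - 1)
          (dOp true a (dOp false l f)) := by
    intro a _
    have h1 : ∀ b ∈ Finset.range N, (∑ lk ∈ Finset.range N ×ˢ Finset.range N, G (a, b) lk)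
        = ∑ l ∈ Finset.range N, ∑ k ∈ Finset.range N, G (a, b) (l, k) := by
      intro b _
      rw [Finset.sum_product]
    rw [Finset.sum_congr rfl h1, Finset.sum_comm]
    exact Finset.sum_congr rfl fun l _ => hbk a l
  rw [Finset.sum_congr rfl hkey]
  -- now collapse the (a,l) double sum
  rw [← Finset.sum_product' (f := fun (a l : ℕ) =>
    emb (AstarBasis ((m : ℚ) + a + l + p - 1/2) (S, T)) (p - 1) (dOp true a (dOp false l f)))]
  rw [← Finset.sum_subset hsubBU ?van2]
  case van2 =>
    rintro ⟨a, l⟩ hbox hnot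
    have hal : N ≤ a + l := by
      by_contra hcon
      exact hnot (Finset.mem_biUnion.2 ⟨a + l, Finset.mem_range.2 (by omega),
        Finset.HasAntidiagonal.mem_antidiagonal.2 rfl⟩)
    rw [AstarBasis_bound, emb_zero']
    rw [show (m : ℚ) + a + l + p - 1/2 = ((m + a + l + p : ℤ) : ℚ) - 1/2 by push_cast; ring,
      floor_half]
    have hNb' := hNb
    rw [bT] at hNb'
    show ((S.sup fun t => (t : ℕ) : ℕ) : ℤ) < _
    omega
  rw [Finset.sum_biUnion hdisj]
  have hinner2 : ∀ r ∈ Finset.range N,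
      (∑ x ∈ Finset.HasAntidiagonal.antidiagonal r,
        emb (AstarBasis ((m : ℚ) + x.1 + x.2 + p - 1/2) (S, T)) (p - 1)
          (dOp true x.1 (dOp false x.2 f)))
      = emb (AstarBasis ((m : ℚ) + r + p - 1/2) (S, T)) (p - 1) (if r = 0 then f else 0) := by
    intro r _
    have hcongr : ∀ x ∈ Finset.HasAntidiagonal.antidiagonal r,
        emb (AstarBasis ((m : ℚ) + x.1 + x.2 + p - 1/2) (S, T)) (p - 1)
          (dOp true x.1 (dOp false x.2 f))
        = emb (AstarBasis ((m : ℚ) + r + p - 1/2) (S, T)) (p - 1)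
            (dOp true x.1 (dOp false x.2 f)) := by
      rintro ⟨a, l⟩ hx
      rw [Finset.HasAntidiagonal.mem_antidiagonal] at hx
      have hq : (a : ℚ) + (l : ℚ) = (r : ℚ) := by exact_mod_cast congrArg (Nat.cast : ℕ → ℚ) hx
      exact embAs_congr (by linarith) _ _ _
    rw [Finset.sum_congr rfl hcongr, ← emb_sum]
    exact congrArg (fun x => emb (AstarBasis ((m : ℚ) + r + p - 1/2) (S, T)) (p - 1) x)
      (conv_d_minus r f)
  rw [Finset.sum_congr rfl hinner2]
  rw [Finset.sum_eq_single_of_mem 0 (Finset.mem_range.2 hN0) ?other2]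
  case other2 =>
    intro r _ hr
    rw [if_neg hr, emb_zero]
  rw [if_pos rfl]
  exact embAs_congr (by push_cast; ring) _ _ _


end ZAux

namespace ZAux

lemma Xop_zero (m : ℤ) : Xop m 0 = 0 := by
  simp only [Xop]
  exact Finsupp.sum_zero_index

lemma Yop_zero (m : ℤ) : Yop m 0 = 0 := by
  simp only [Yop]
  exact Finsupp.sum_zero_index

lemma Xop_add (m : ℤ) (u v : VV) : Xop m (u + v) = Xop m u + Xop m v := by
  simp only [Xop]
  apply Finsupp.sum_add_index'
  · intro STp
    have h : ∀ lk : ℕ × ℕ,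
        emb (Abasis ((m : ℚ) + lk.1 - lk.2 - STp.2 - 1/2) STp.1) (STp.2 + 1)
          (dOp true lk.1 (cOp true lk.2 (0 : Fock))) = 0 := by
      intro lk
      rw [map_zero, map_zero, emb_zero]
    rw [finsum_congr h, finsum_zero]
  · intro STp f g
    have h : ∀ lk : ℕ × ℕ,
        emb (Abasis ((m : ℚ) + lk.1 - lk.2 - STp.2 - 1/2) STp.1) (STp.2 + 1)
          (dOp true lk.1 (cOp true lk.2 (f + g)))
        = emb (Abasis ((m : ℚ) + lk.1 - lk.2 - STp.2 - 1/2) STp.1) (STp.2 + 1)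
            (dOp true lk.1 (cOp true lk.2 f))
          + emb (Abasis ((m : ℚ) + lk.1 - lk.2 - STp.2 - 1/2) STp.1) (STp.2 + 1)
              (dOp true lk.1 (cOp true lk.2 g)) := by
      intro lk
      rw [map_add, map_add, emb_add]
    rw [finsum_congr h, finsum_add_distrib (suppX m STp.1 STp.2 f) (suppX m STp.1 STp.2 g)]

lemma Yop_add (m : ℤ) (u v : VV) : Yop m (u + v) = Yop m u + Yop m v := by
  simp only [Yop]
  apply Finsupp.sum_add_index'
  · intro STp
    have h : ∀ lk : ℕ × ℕ,
        emb (AstarBasis ((m : ℚ) + lk.1 - lk.2 + STp.2 - 1/2) STp.1) (STp.2 - 1)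
          (dOp false lk.1 (cOp false lk.2 (0 : Fock))) = 0 := by
      intro lk
      rw [map_zero, map_zero, emb_zero]
    rw [finsum_congr h, finsum_zero]
  · intro STp f g
    have h : ∀ lk : ℕ × ℕ,
        emb (AstarBasis ((m : ℚ) + lk.1 - lk.2 + STp.2 - 1/2) STp.1) (STp.2 - 1)
          (dOp false lk.1 (cOp false lk.2 (f + g)))
        = emb (AstarBasis ((m : ℚ) + lk.1 - lk.2 + STp.2 - 1/2) STp.1) (STp.2 - 1)
            (dOp false lk.1 (cOp false lk.2 f))
          + emb (AstarBasis ((m : ℚ) + lk.1 - lk.2 + STp.2 - 1/2) STp.1) (STp.2 - 1)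
              (dOp false lk.1 (cOp false lk.2 g)) := by
      intro lk
      rw [map_add, map_add, emb_add]
    rw [finsum_congr h, finsum_add_distrib (suppY m STp.1 STp.2 f) (suppY m STp.1 STp.2 g)]

lemma extF_eq_mapRange (e : EndF) (u : VV) :
    extF e u = Finsupp.mapRange (⇑e) (map_zero e) u := by
  induction u using Finsupp.induction with
  | zero => rw [extF_zero, Finsupp.mapRange_zero]
  | single_add a b f _ _ ih =>
    rw [extF_add, ih, Finsupp.mapRange_add (map_add e), extF_single, Finsupp.mapRange_single]

/-- weight bound for all Fock coordinates of `u` -/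
noncomputable def Wu (u : VV) : ℕ := u.support.sup fun STp => (u STp).support.sup wt

lemma hWu (u : VV) : ∀ STp, WLE (Wu u) (u STp) := by
  intro STp μ hμ
  by_cases h : STp ∈ u.support
  · exact le_trans (Finset.le_sup hμ) (Finset.le_sup (f := fun STp => (u STp).support.sup wt) h)
  · rw [Finsupp.notMem_support_iff.1 h] at hμ
    simp at hμ

lemma extF_cOp_zero (ε : Bool) (u : VV) {b : ℕ} (hb : Wu u < b) : extF (cOp ε b) u = 0 := by
  rw [extF]
  apply Finset.sum_eq_zero
  intro STp _
  show Finsupp.single STp (cOp ε b (u STp)) = 0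
  rw [cOp_eq_zero (hWu u STp) ε hb, Finsupp.single_zero]

end ZAux

namespace ZAux

lemma suppZplus (m : ℤ) (u : VV) :
    (Function.support fun ab : ℕ × ℕ =>
      extF (dOp false ab.1)
        (Xop (m + ab.1 - ab.2) (extF (cOp false ab.2) u))).Finite := by
  classical
  obtain ⟨N, hNW, hNb⟩ : ∃ N : ℕ, (Wu u : ℤ) < N ∧
      ∀ STp ∈ u.support, bT STp.1.2 + 1 + 2 * (Wu u : ℤ) + STp.2 - m < N := by
    refine ⟨max (Wu u + 1)
      ((u.support.sup fun STp => (bT STp.1.2 + 1 + 2 * (Wu u : ℤ) + STp.2 - m).toNat) + 1),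
      ?_, ?_⟩
    · have h := le_max_left (Wu u + 1)
        ((u.support.sup fun STp => (bT STp.1.2 + 1 + 2 * (Wu u : ℤ) + STp.2 - m).toNat) + 1)
      omega
    · intro STp hSTp
      have h1 : (bT STp.1.2 + 1 + 2 * (Wu u : ℤ) + STp.2 - m).toNat
          ≤ u.support.sup fun STp => (bT STp.1.2 + 1 + 2 * (Wu u : ℤ) + STp.2 - m).toNat :=
        Finset.le_sup (f := fun STp : (Finset ℕ+ × Finset ℕ+) × ℤ =>
          (bT STp.1.2 + 1 + 2 * (Wu u : ℤ) + STp.2 - m).toNat) hSTp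
      have h2 := le_max_right (Wu u + 1)
        ((u.support.sup fun STp => (bT STp.1.2 + 1 + 2 * (Wu u : ℤ) + STp.2 - m).toNat) + 1)
      omega
  apply Set.Finite.subset (Finset.range N ×ˢ Finset.range N).finite_toSet
  intro ab hab
  simp only [Finset.coe_product, Set.mem_prod, Finset.mem_coe, Finset.mem_range]
  by_contra hc
  push_neg at hc
  apply hab
  show extF (dOp false ab.1) (Xop (m + ab.1 - ab.2) (extF (cOp false ab.2) u)) = 0
  rcases lt_or_ge (Wu u) ab.2 with hb | hb
  · rw [extF_cOp_zero false u hb, Xop_zero, extF_zero]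
  · have ha : N ≤ ab.1 := by omega
    have hXzero : Xop (m + ab.1 - ab.2) (extF (cOp false ab.2) u) = 0 := by
      rw [extF_eq_mapRange]
      simp only [Xop]
      rw [Finsupp.sum_mapRange_index]
      · apply Finset.sum_eq_zero
        intro STp hSTp
        show (∑ᶠ lk : ℕ × ℕ,
          emb (Abasis (((m + ab.1 - ab.2 : ℤ) : ℚ) + lk.1 - lk.2 - STp.2 - 1/2) STp.1)
            (STp.2 + 1) (dOp true lk.1 (cOp true lk.2 (cOp false ab.2 (u STp))))) = 0
        have hvan : ∀ lk : ℕ × ℕ,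
            emb (Abasis (((m + ab.1 - ab.2 : ℤ) : ℚ) + lk.1 - lk.2 - STp.2 - 1/2) STp.1)
              (STp.2 + 1) (dOp true lk.1 (cOp true lk.2 (cOp false ab.2 (u STp)))) = 0 := by
          intro lk
          have hwle : WLE (Wu u) (cOp false ab.2 (u STp)) := by
            intro ν hν
            have := cOp_wle (hWu u STp) false ab.2 ν hν
            omega
          apply X_vanish (m + ab.1 - ab.2) STp.1 STp.2 _ (Wu u) hwle
          rcases lt_or_ge (Wu u) lk.2 with hk | hk
          · exact Or.inl hk
          · refine Or.inr ?_
            have hle := hNb STp hSTp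
            omega
        rw [finsum_congr hvan, finsum_zero]
      · intro STp
        have h : ∀ lk : ℕ × ℕ,
            emb (Abasis (((m + ab.1 - ab.2 : ℤ) : ℚ) + lk.1 - lk.2 - STp.2 - 1/2) STp.1)
              (STp.2 + 1) (dOp true lk.1 (cOp true lk.2 (0 : Fock))) = 0 := by
          intro lk
          rw [map_zero, map_zero, emb_zero]
        rw [finsum_congr h, finsum_zero]
    rw [hXzero, extF_zero]

lemma suppZminus (m : ℤ) (u : VV) :
    (Function.support fun ab : ℕ × ℕ =>
      extF (dOp true ab.1)
        (Yop (m + ab.1 - ab.2) (extF (cOp true ab.2) u))).Finite := by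
  classical
  obtain ⟨N, hNW, hNb⟩ : ∃ N : ℕ, (Wu u : ℤ) < N ∧
      ∀ STp ∈ u.support, bT STp.1.1 + 1 + 2 * (Wu u : ℤ) - STp.2 - m < N := by
    refine ⟨max (Wu u + 1)
      ((u.support.sup fun STp => (bT STp.1.1 + 1 + 2 * (Wu u : ℤ) - STp.2 - m).toNat) + 1),
      ?_, ?_⟩
    · have h := le_max_left (Wu u + 1)
        ((u.support.sup fun STp => (bT STp.1.1 + 1 + 2 * (Wu u : ℤ) - STp.2 - m).toNat) + 1)
      omega
    · intro STp hSTp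
      have h1 : (bT STp.1.1 + 1 + 2 * (Wu u : ℤ) - STp.2 - m).toNat
          ≤ u.support.sup fun STp => (bT STp.1.1 + 1 + 2 * (Wu u : ℤ) - STp.2 - m).toNat :=
        Finset.le_sup (f := fun STp : (Finset ℕ+ × Finset ℕ+) × ℤ =>
          (bT STp.1.1 + 1 + 2 * (Wu u : ℤ) - STp.2 - m).toNat) hSTp
      have h2 := le_max_right (Wu u + 1)
        ((u.support.sup fun STp => (bT STp.1.1 + 1 + 2 * (Wu u : ℤ) - STp.2 - m).toNat) + 1)
      omega
  apply Set.Finite.subset (Finset.range N ×ˢ Finset.range N).finite_toSet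
  intro ab hab
  simp only [Finset.coe_product, Set.mem_prod, Finset.mem_coe, Finset.mem_range]
  by_contra hc
  push_neg at hc
  apply hab
  show extF (dOp true ab.1) (Yop (m + ab.1 - ab.2) (extF (cOp true ab.2) u)) = 0
  rcases lt_or_ge (Wu u) ab.2 with hb | hb
  · rw [extF_cOp_zero true u hb, Yop_zero, extF_zero]
  · have ha : N ≤ ab.1 := by omega
    have hYzero : Yop (m + ab.1 - ab.2) (extF (cOp true ab.2) u) = 0 := by
      rw [extF_eq_mapRange]
      simp only [Yop]
      rw [Finsupp.sum_mapRange_index]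
      · apply Finset.sum_eq_zero
        intro STp hSTp
        show (∑ᶠ lk : ℕ × ℕ,
          emb (AstarBasis (((m + ab.1 - ab.2 : ℤ) : ℚ) + lk.1 - lk.2 + STp.2 - 1/2) STp.1)
            (STp.2 - 1) (dOp false lk.1 (cOp false lk.2 (cOp true ab.2 (u STp))))) = 0
        have hvan : ∀ lk : ℕ × ℕ,
            emb (AstarBasis (((m + ab.1 - ab.2 : ℤ) : ℚ) + lk.1 - lk.2 + STp.2 - 1/2) STp.1)
              (STp.2 - 1) (dOp false lk.1 (cOp false lk.2 (cOp true ab.2 (u STp)))) = 0 := by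
          intro lk
          have hwle : WLE (Wu u) (cOp true ab.2 (u STp)) := by
            intro ν hν
            have := cOp_wle (hWu u STp) true ab.2 ν hν
            omega
          apply Y_vanish (m + ab.1 - ab.2) STp.1 STp.2 _ (Wu u) hwle
          rcases lt_or_ge (Wu u) lk.2 with hk | hk
          · exact Or.inl hk
          · refine Or.inr ?_
            have hle := hNb STp hSTp
            omega
        rw [finsum_congr hvan, finsum_zero]
      · intro STp
        have h : ∀ lk : ℕ × ℕ,
            emb (AstarBasis (((m + ab.1 - ab.2 : ℤ) : ℚ) + lk.1 - lk.2 + STp.2 - 1/2) STp.1)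
              (STp.2 - 1) (dOp false lk.1 (cOp false lk.2 (0 : Fock))) = 0 := by
          intro lk
          rw [map_zero, map_zero, emb_zero]
        rw [finsum_congr h, finsum_zero]
    rw [hYzero, extF_zero]

lemma ZplusV_add (m : ℤ) (u v : VV) : ZplusV m (u + v) = ZplusV m u + ZplusV m v := by
  simp only [ZplusV]
  rw [← finsum_add_distrib (suppZplus m u) (suppZplus m v)]
  refine finsum_congr fun ab => ?_
  rw [extF_add, Xop_add, extF_add]

lemma ZminusV_add (m : ℤ) (u v : VV) : ZminusV m (u + v) = ZminusV m u + ZminusV m v := by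
  simp only [ZminusV]
  rw [← finsum_add_distrib (suppZminus m u) (suppZminus m v)]
  refine finsum_congr fun ab => ?_
  rw [extF_add, Yop_add, extF_add]

/-- `ZplusV m` as an additive monoid hom -/
noncomputable def ZplusHom (m : ℤ) : VV →+ VV :=
  AddMonoidHom.mk' (fun u => ZplusV m u) (ZplusV_add m)

/-- `ZminusV m` as an additive monoid hom -/
noncomputable def ZminusHom (m : ℤ) : VV →+ VV :=
  AddMonoidHom.mk' (fun u => ZminusV m u) (ZminusV_add m)

end ZAux

namespace ZAux

lemma Zplus_comm (m : ℤ) (e : EndF) (u : VV) :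
    ZplusV m (extF e u) = extF e (ZplusV m u) := by
  classical
  have hsingle : ∀ (x : (Finset ℕ+ × Finset ℕ+) × ℤ) (f : Fock),
      ZplusV m (extF e (Finsupp.single x f)) = extF e (ZplusV m (Finsupp.single x f)) := by
    rintro ⟨⟨S, T⟩, p⟩ f
    rw [extF_single, ZplusV_single, ZplusV_single, extF_emb]
  have hrep : ∑ x ∈ u.support, Finsupp.single x (u x) = u := Finsupp.sum_single u
  have h1 : ZplusV m (extF e (∑ x ∈ u.support, Finsupp.single x (u x)))
      = ∑ x ∈ u.support, ZplusV m (extF e (Finsupp.single x (u x))) := by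
    rw [show extF e = ⇑(extFHom e) from rfl, map_sum,
      show ZplusV m = ⇑(ZplusHom m) from rfl, map_sum]
  have h2 : extF e (ZplusV m (∑ x ∈ u.support, Finsupp.single x (u x)))
      = ∑ x ∈ u.support, extF e (ZplusV m (Finsupp.single x (u x))) := by
    rw [show ZplusV m = ⇑(ZplusHom m) from rfl, map_sum,
      show extF e = ⇑(extFHom e) from rfl, map_sum]
  rw [← hrep, h1, h2]
  exact Finset.sum_congr rfl fun x _ => hsingle x (u x)

lemma Zminus_comm (m : ℤ) (e : EndF) (u : VV) :
    ZminusV m (extF e u) = extF e (ZminusV m u) := by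
  classical
  have hsingle : ∀ (x : (Finset ℕ+ × Finset ℕ+) × ℤ) (f : Fock),
      ZminusV m (extF e (Finsupp.single x f)) = extF e (ZminusV m (Finsupp.single x f)) := by
    rintro ⟨⟨S, T⟩, p⟩ f
    rw [extF_single, ZminusV_single, ZminusV_single, extF_emb]
  have hrep : ∑ x ∈ u.support, Finsupp.single x (u x) = u := Finsupp.sum_single u
  have h1 : ZminusV m (extF e (∑ x ∈ u.support, Finsupp.single x (u x)))
      = ∑ x ∈ u.support, ZminusV m (extF e (Finsupp.single x (u x))) := by
    rw [show extF e = ⇑(extFHom e) from rfl, map_sum,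
      show ZminusV m = ⇑(ZminusHom m) from rfl, map_sum]
  have h2 : extF e (ZminusV m (∑ x ∈ u.support, Finsupp.single x (u x)))
      = ∑ x ∈ u.support, extF e (ZminusV m (Finsupp.single x (u x))) := by
    rw [show ZminusV m = ⇑(ZminusHom m) from rfl, map_sum,
      show extF e = ⇑(extFHom e) from rfl, map_sum]
  rw [← hrep, h1, h2]
  exact Finset.sum_congr rfl fun x _ => hsingle x (u x)

end ZAux

theorem statement16 :
    (∀ (m : ℤ) (S T : Finset ℕ+) (p : ℤ) (f : Fock),
        ZplusV m (Finsupp.single ((S, T), p) f) =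
          emb (Abasis ((m : ℚ) - p - 1/2) (S, T)) (p + 1) f) ∧
    (∀ (m : ℤ) (S T : Finset ℕ+) (p : ℤ) (f : Fock),
        ZminusV m (Finsupp.single ((S, T), p) f) =
          emb (AstarBasis ((m : ℚ) + p - 1/2) (S, T)) (p - 1) f) ∧
    (∀ (m n : ℤ), n ≠ 0 → ∀ u : VV,
        ZplusV m (extF (HF n) u) = extF (HF n) (ZplusV m u) ∧
        ZminusV m (extF (HF n) u) = extF (HF n) (ZminusV m u)) := by
  refine ⟨fun m S T p f => ZAux.ZplusV_single m S T p f,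
    fun m S T p f => ZAux.ZminusV_single m S T p f,
    fun m n _ u => ⟨ZAux.Zplus_comm m (HF n) u, ZAux.Zminus_comm m (HF n) u⟩⟩
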